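/- For each pair (a, [S_min, S_max]) in the list (0.91, [0.99, 1.12]), (1.02, [1.12, 1.32]), (1.16, [1.32, 1.60]), (1.33, [1.59, 2.01]), (1.56, [2.00, 2.74]), (1.90, [2.73, 4.00]), (2.30, [4.00, ∞)), and for every g ∈ (0,1) and real L such that S_min ≤ L + a·g ≤ S_max, the starter S̃ = L + a·g is an approximate zero of f_{g,L}. -/

import Mathlib

noncomputable section

/-- The hyperbolic Kepler function `f_{g,L}(S) = S - g·arcsinh(S) - L`. -/
def fhk (g L : ℝ) : ℝ → ℝ := fun S => S - g * Real.arsinh S - L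

/-- `β(f,z) = |f(z)/f'(z)|`. -/
def betaFn (f : ℝ → ℝ) (z : ℝ) : ℝ := |f z / deriv f z|

/-- `γ(f,z) = sup_{k ≥ 2} |f^{(k)}(z)/(k!·f'(z))|^{1/(k-1)}`. -/
def gammaFn (f : ℝ → ℝ) (z : ℝ) : ℝ :=
  sSup {y : ℝ | ∃ k : ℕ, 2 ≤ k ∧
    y = |iteratedDeriv k f z / (Nat.factorial k * deriv f z)| ^ ((1 : ℝ) / ((k : ℝ) - 1))}

/-- `α(f,z) = β(f,z)·γ(f,z)`. -/
def alphaFn (f : ℝ → ℝ) (z : ℝ) : ℝ := betaFn f z * gammaFn f z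

/-- Smale's constant (improved by Wang–Han): `α₀ = 3 - 2√2`. -/
def alpha0 : ℝ := 3 - 2 * Real.sqrt 2

/-- `z` is an approximate zero of `f` when `α(f,z) < α₀`. -/
def ApproxZero (f : ℝ → ℝ) (z : ℝ) : Prop := alphaFn f z < alpha0

section AuxHK
open Finset

def ee (j : ℕ) : ℝ := -(1/2) - j

def TT (p q : ℝ) (x : ℝ) : ℂ := ((x:ℂ) + Complex.I)^(p:ℂ) * ((x:ℂ) - Complex.I)^(q:ℂ)

lemma mem_sp1 (x : ℝ) : ((x:ℂ) + Complex.I) ∈ Complex.slitPlane :=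
  Complex.mem_slitPlane_iff.2 (Or.inr (by simp))

lemma mem_sp2 (x : ℝ) : ((x:ℂ) - Complex.I) ∈ Complex.slitPlane :=
  Complex.mem_slitPlane_iff.2 (Or.inr (by simp))

lemma ne1 (x : ℝ) : ((x:ℂ) + Complex.I) ≠ 0 := Complex.slitPlane_ne_zero (mem_sp1 x)

lemma ne2 (x : ℝ) : ((x:ℂ) - Complex.I) ≠ 0 := Complex.slitPlane_ne_zero (mem_sp2 x)

lemma abs1 (x : ℝ) : norm ((x:ℂ) + Complex.I) = Real.sqrt (1 + x^2) := by
  rw [show ((x:ℂ) + Complex.I) = ⟨x, 1⟩ by apply Complex.ext <;> simp]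
  rw [Complex.norm_def, Complex.normSq_mk]
  ring_nf

lemma abs2 (x : ℝ) : norm ((x:ℂ) - Complex.I) = Real.sqrt (1 + x^2) := by
  rw [show ((x:ℂ) - Complex.I) = ⟨x, -1⟩ by apply Complex.ext <;> simp]
  rw [Complex.norm_def, Complex.normSq_mk]
  ring_nf

lemma hasDerivAt_TT (p q : ℝ) (x : ℝ) :
    HasDerivAt (TT p q) ((p:ℂ) * TT (p-1) q x + (q:ℂ) * TT p (q-1) x) x := by
  have h1 : HasDerivAt (fun y : ℝ => ((y:ℂ) + Complex.I)^((p:ℝ):ℂ))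
      ((p:ℂ) * ((x:ℂ) + Complex.I)^((p:ℂ) - 1) * 1) x := by
    have : HasDerivAt (fun w : ℂ => (w + Complex.I)^((p:ℝ):ℂ))
        ((p:ℂ) * ((x:ℂ) + Complex.I)^((p:ℂ) - 1) * 1) (x:ℂ) :=
      ((hasDerivAt_id ((x:ℂ))).add_const Complex.I).cpow_const (mem_sp1 x)
    exact this.comp_ofReal
  have h2 : HasDerivAt (fun y : ℝ => ((y:ℂ) - Complex.I)^((q:ℝ):ℂ))
      ((q:ℂ) * ((x:ℂ) - Complex.I)^((q:ℂ) - 1) * 1) x := by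
    have : HasDerivAt (fun w : ℂ => (w - Complex.I)^((q:ℝ):ℂ))
        ((q:ℂ) * ((x:ℂ) - Complex.I)^((q:ℂ) - 1) * 1) (x:ℂ) :=
      ((hasDerivAt_id ((x:ℂ))).sub_const Complex.I).cpow_const (mem_sp2 x)
    exact this.comp_ofReal
  have h := h1.mul h2
  convert h using 1
  · rfl
  · rfl
  simp only [TT, mul_one]
  push_cast
  ring

def GC : ℝ → ℂ := TT (ee 0) (ee 0)

lemma ee_sub (j : ℕ) : ee j - 1 = ee (j+1) := by simp [ee]; ring

lemma abs_ee (j : ℕ) : norm ((ee j : ℝ) : ℂ) = 1/2 + j := by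
  rw [Complex.norm_real, Real.norm_eq_abs, ee, abs_of_nonpos (by have := Nat.cast_nonneg (α := ℝ) j; linarith)]
  ring

lemma rep (n : ℕ) : ∃ c : ℕ → ℂ,
    (∑ j ∈ range (n+1), norm (c j)) ≤ n.factorial ∧
    iteratedDeriv n GC = fun x => ∑ j ∈ range (n+1), c j * TT (ee j) (ee (n-j)) x := by
  induction n with
  | zero =>
    refine ⟨fun _ => 1, by simp, ?_⟩
    simp [iteratedDeriv_zero, GC]
  | succ n ih =>
    obtain ⟨c, hc, hrep⟩ := ih
    refine ⟨fun k => (if k = 0 then 0 else c (k-1) * ((ee (k-1) : ℝ) : ℂ))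
      + (if k ≤ n then c k * ((ee (n-k) : ℝ) : ℂ) else 0), ?_, ?_⟩
    · calc ∑ k ∈ range (n+2), norm ((if k = 0 then 0 else c (k-1) * ((ee (k-1):ℝ):ℂ))
            + (if k ≤ n then c k * ((ee (n-k):ℝ):ℂ) else 0))
          ≤ ∑ k ∈ range (n+2), (norm (if k = 0 then 0 else c (k-1) * ((ee (k-1):ℝ):ℂ))
            + norm (if k ≤ n then c k * ((ee (n-k):ℝ):ℂ) else 0)) := by
            exact Finset.sum_le_sum fun k _ => norm_add_le _ _
      _ = (∑ k ∈ range (n+2), norm (if k = 0 then 0 else c (k-1) * ((ee (k-1):ℝ):ℂ)))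
            + ∑ k ∈ range (n+2), norm (if k ≤ n then c k * ((ee (n-k):ℝ):ℂ) else 0) := by
            rw [Finset.sum_add_distrib]
      _ ≤ (∑ j ∈ range (n+1), norm (c j) * (1/2 + j))
            + ∑ j ∈ range (n+1), norm (c j) * (1/2 + (n - j : ℕ)) := by
            gcongr ?_ + ?_
            · rw [Finset.sum_range_succ']
              simp only [Nat.add_eq_zero, one_ne_zero, and_false, if_false, if_pos,
                Nat.add_sub_cancel, norm_zero, add_zero, norm_mul, abs_ee, if_true, ite_true,
                reduceIte]
              exact le_of_eq rfl
            · rw [Finset.sum_range_succ]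
              rw [if_neg (by omega), norm_zero, add_zero]
              refine le_of_eq (Finset.sum_congr rfl fun k hk => ?_)
              rw [if_pos (by simp at hk; omega), norm_mul, abs_ee]
      _ = ∑ j ∈ range (n+1), norm (c j) * (n+1) := by
            rw [← Finset.sum_add_distrib]
            refine Finset.sum_congr rfl fun j hj => ?_
            have hj' : j ≤ n := by simp at hj; omega
            rw [← mul_add]
            congr 1
            have : ((n - j : ℕ) : ℝ) = (n : ℝ) - j := by
              rw [Nat.cast_sub hj']
            rw [this]; ring
      _ = (∑ j ∈ range (n+1), norm (c j)) * (n+1) := by rw [Finset.sum_mul]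
      _ ≤ (n.factorial : ℝ) * (n+1) := by
            apply mul_le_mul_of_nonneg_right hc (by positivity)
      _ = ((n+1).factorial : ℝ) := by
            rw [Nat.factorial_succ]; push_cast; ring
    · funext x
      rw [iteratedDeriv_succ, hrep]
      have hder : HasDerivAt (fun y => ∑ j ∈ range (n+1), c j * TT (ee j) (ee (n-j)) y)
          (∑ j ∈ range (n+1), c j * (((ee j : ℝ):ℂ) * TT (ee j - 1) (ee (n-j)) x
            + ((ee (n-j) : ℝ):ℂ) * TT (ee j) (ee (n-j) - 1) x)) x := by
        exact HasDerivAt.fun_sum fun j _ => (hasDerivAt_TT (ee j) (ee (n-j)) x).const_mul (c j)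
      rw [hder.deriv]
      have split : ∑ j ∈ range (n+1), c j * (((ee j : ℝ):ℂ) * TT (ee j - 1) (ee (n-j)) x
            + ((ee (n-j) : ℝ):ℂ) * TT (ee j) (ee (n-j) - 1) x)
          = (∑ j ∈ range (n+1), c j * ((ee j : ℝ):ℂ) * TT (ee (j+1)) (ee (n-j)) x)
            + ∑ j ∈ range (n+1), c j * ((ee (n-j) : ℝ):ℂ) * TT (ee j) (ee ((n-j)+1)) x := by
        rw [← Finset.sum_add_distrib]
        refine Finset.sum_congr rfl fun j hj => ?_
        rw [ee_sub, ee_sub]; ring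
      rw [split]
      have e1 : (∑ k ∈ range (n+2), (if k = 0 then 0 else c (k-1) * ((ee (k-1):ℝ):ℂ))
            * TT (ee k) (ee (n+1-k)) x)
          = ∑ j ∈ range (n+1), c j * ((ee j : ℝ):ℂ) * TT (ee (j+1)) (ee (n-j)) x := by
        rw [Finset.sum_range_succ']
        simp only [zero_mul, add_zero, Nat.add_eq_zero, one_ne_zero, and_false,
          if_false, Nat.add_sub_cancel, reduceIte, ite_true, if_true]
        refine Finset.sum_congr rfl fun j hj => ?_
        have hne : n + 1 - (j + 1) = n - j := by omega
        rw [hne]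
      have e2 : (∑ k ∈ range (n+2), (if k ≤ n then c k * ((ee (n-k):ℝ):ℂ) else 0)
            * TT (ee k) (ee (n+1-k)) x)
          = ∑ j ∈ range (n+1), c j * ((ee (n-j) : ℝ):ℂ) * TT (ee j) (ee ((n-j)+1)) x := by
        rw [Finset.sum_range_succ, if_neg (by omega), zero_mul, add_zero]
        refine Finset.sum_congr rfl fun k hk => ?_
        have hk' : k ≤ n := by simp at hk; omega
        rw [if_pos hk']
        have hne : n + 1 - k = (n - k) + 1 := by omega
        rw [hne]
      rw [← e1, ← e2, ← Finset.sum_add_distrib]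
      refine (Finset.sum_congr rfl fun k hk => ?_).symm
      ring

def GR : ℝ → ℝ := fun x => (Real.sqrt (1 + x^2))⁻¹

lemma sqrt1x_pos (x : ℝ) : 0 < Real.sqrt (1 + x^2) := Real.sqrt_pos.2 (by positivity)

lemma abs_TT (p q x : ℝ) : norm (TT p q x) = Real.sqrt (1 + x^2) ^ (p + q) := by
  rw [TT, norm_mul, Complex.norm_cpow_of_ne_zero (ne1 x), Complex.norm_cpow_of_ne_zero (ne2 x)]
  simp only [Complex.ofReal_re, Complex.ofReal_im, mul_zero, Real.exp_zero, div_one]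
  rw [abs1, abs2, ← Real.rpow_add (sqrt1x_pos x)]

lemma GC_bound (n : ℕ) (x : ℝ) :
    norm (iteratedDeriv n GC x) ≤ n.factorial / Real.sqrt (1 + x^2) ^ (n+1) := by
  obtain ⟨c, hc, hrep⟩ := rep n
  rw [hrep]
  have hr := sqrt1x_pos x
  calc norm (∑ j ∈ range (n+1), c j * TT (ee j) (ee (n-j)) x)
      ≤ ∑ j ∈ range (n+1), norm (c j * TT (ee j) (ee (n-j)) x) :=
        norm_sum_le _ _
    _ = ∑ j ∈ range (n+1), norm (c j) * (Real.sqrt (1 + x^2))⁻¹ ^ (n+1) := by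
        refine Finset.sum_congr rfl fun j hj => ?_
        have hj' : j ≤ n := by simp at hj; omega
        rw [norm_mul, abs_TT]
        congr 1
        have : ee j + ee (n - j) = -((n:ℝ)+1) := by
          rw [ee, ee, Nat.cast_sub hj']; ring
        rw [this]
        rw [show -((n:ℝ)+1) = -(((n+1:ℕ)):ℝ) by push_cast; ring]
        rw [Real.rpow_neg hr.le, Real.rpow_natCast, inv_pow]
    _ = (∑ j ∈ range (n+1), norm (c j)) * (Real.sqrt (1 + x^2))⁻¹ ^ (n+1) := by
        rw [Finset.sum_mul]
    _ ≤ n.factorial * (Real.sqrt (1 + x^2))⁻¹ ^ (n+1) := by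
        apply mul_le_mul_of_nonneg_right hc (by positivity)
    _ = n.factorial / Real.sqrt (1 + x^2) ^ (n+1) := by
        rw [inv_pow, div_eq_mul_inv]

lemma log_add_log (x : ℝ) :
    Complex.log ((x:ℂ) + Complex.I) + Complex.log ((x:ℂ) - Complex.I)
      = (Real.log (1 + x^2) : ℂ) := by
  have hconj : ((x:ℂ) - Complex.I) = starRingEnd ℂ ((x:ℂ) + Complex.I) := by
    apply Complex.ext <;> simp
  have harg : Complex.arg ((x:ℂ) + Complex.I) ≠ Real.pi := by
    intro h
    have := Complex.arg_eq_pi_iff.1 h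
    simp at this
  rw [Complex.log, Complex.log, abs1, abs2, hconj, Complex.arg_conj, if_neg harg]
  push_cast
  rw [Real.log_sqrt (by positivity)]
  apply Complex.ext <;> simp <;> ring

lemma GC_eq (x : ℝ) : GC x = ((GR x : ℝ) : ℂ) := by
  rw [GC, TT, Complex.cpow_def_of_ne_zero (ne1 x), Complex.cpow_def_of_ne_zero (ne2 x),
    ← Complex.exp_add, ← add_mul, log_add_log]
  rw [show (Real.log (1 + x^2) : ℂ) * ((ee 0 : ℝ) : ℂ) = ((ee 0 * Real.log (1+x^2) : ℝ) : ℂ) by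
    push_cast; ring]
  rw [← Complex.ofReal_exp]
  congr 1
  rw [GR, ee]
  push_cast
  rw [show (-(1/2 : ℝ) - 0) * Real.log (1 + x^2) = -(Real.log (1+x^2) / 2) by ring,
    ← Real.log_sqrt (by positivity), Real.exp_neg, Real.exp_log (sqrt1x_pos x)]

lemma deriv_arsinh : deriv Real.arsinh = GR :=
  funext fun x => (Real.hasDerivAt_arsinh x).deriv

lemma GR_contDiff : ContDiff ℝ (⊤ : ℕ∞) GR := by
  have h := (contDiff_infty_iff_deriv.1 Real.contDiff_arsinh).2
  rwa [deriv_arsinh] at h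

lemma GR_diff_iter (n : ℕ) : Differentiable ℝ (iteratedDeriv n GR) := by
  rw [iteratedDeriv_eq_iterate]
  exact (GR_contDiff.iterate_deriv n).differentiable (by simp)

lemma iter_ofReal (n : ℕ) : iteratedDeriv n GC = fun x => ((iteratedDeriv n GR x : ℝ) : ℂ) := by
  induction n with
  | zero => funext x; simpa [iteratedDeriv_zero] using GC_eq x
  | succ n ih =>
    funext x
    rw [iteratedDeriv_succ, iteratedDeriv_succ, ih]
    have hd : HasDerivAt (iteratedDeriv n GR) (deriv (iteratedDeriv n GR) x) x :=
      (GR_diff_iter n x).hasDerivAt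
    exact hd.ofReal_comp.deriv

lemma GR_bound' (n : ℕ) (x : ℝ) :
    |iteratedDeriv n GR x| ≤ n.factorial / Real.sqrt (1 + x^2) ^ (n+1) := by
  have h := GC_bound n x
  rw [iter_ofReal] at h
  rwa [Complex.norm_real, Real.norm_eq_abs] at h

lemma fhk_hasDeriv (g L z : ℝ) :
    HasDerivAt (fhk g L) (1 - g * GR z) z := by
  have h := (((hasDerivAt_id z).sub (((Real.hasDerivAt_arsinh z)).const_mul g)).sub_const L)
  show HasDerivAt (fun S => S - g * Real.arsinh S - L) _ z
  simpa [GR] using h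

lemma fhk_deriv (g L z : ℝ) : deriv (fhk g L) z = 1 - g * GR z := (fhk_hasDeriv g L z).deriv

lemma fhk_iter (g L : ℝ) (m : ℕ) (hm : 1 ≤ m) (z : ℝ) :
    iteratedDeriv (m+1) (fhk g L) z = -(g * iteratedDeriv m GR z) := by
  rw [iteratedDeriv_succ', show deriv (fhk g L) = fun S => 1 - g * GR S from funext (fhk_deriv g L)]
  rw [← iteratedDerivWithin_univ, ← iteratedDerivWithin_univ]
  rw [iteratedDerivWithin_const_sub hm (1:ℝ)]
  rw [iteratedDerivWithin_fun_neg]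
  rw [iteratedDerivWithin_const_mul (Set.mem_univ z) uniqueDiffOn_univ g
    ((GR_contDiff.of_le (by exact_mod_cast le_top)).contDiffOn z (Set.mem_univ z))]

lemma key (g L a z : ℝ) (hg0 : 0 < g) (hg1 : g < 1) (hz : L + a * g = z) (hz0 : 0 < z) :
    alphaFn (fhk g L) z ≤ g * |a - Real.arsinh z|
      * max (g / (2 * (Real.sqrt (1 + z^2) - g))) 1 / (Real.sqrt (1 + z^2) - g) := by
  set r := Real.sqrt (1 + z^2) with hr
  have hr1 : (1:ℝ) < r := (Real.lt_sqrt (by norm_num : (0:ℝ) ≤ 1)).2 (by nlinarith)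
  have hrpos : (0:ℝ) < r := by linarith
  have hrg : (0:ℝ) < r - g := by linarith
  set M := max (g / (2 * (r - g))) 1 with hM
  have hM1 : (1:ℝ) ≤ M := le_max_right _ _
  have hMg : g / (2 * (r - g)) ≤ M := le_max_left _ _
  have hMpos : (0:ℝ) < M := by linarith
  have hd : deriv (fhk g L) z = (r - g) / r := by
    rw [fhk_deriv, GR, ← hr]
    field_simp
  have hdpos : (0:ℝ) < (r - g) / r := by positivity
  have hbeta : betaFn (fhk g L) z = g * |a - Real.arsinh z| * (r / (r - g)) := by
    rw [betaFn, hd, abs_div, abs_of_pos hdpos]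
    have hfz : fhk g L z = g * (a - Real.arsinh z) := by
      show z - g * Real.arsinh z - L = g * (a - Real.arsinh z)
      linear_combination -hz
    rw [hfz, abs_mul, abs_of_pos hg0]
    field_simp
  have hgamma : gammaFn (fhk g L) z ≤ M / r := by
    apply Real.sSup_le
    · rintro y ⟨k, hk2, rfl⟩
      have hk1 : 1 ≤ k - 1 := by omega
      have hkm : k - 1 + 1 = k := by omega
      have hkpos : (0:ℝ) < (k:ℝ) := by positivity
      have hk2' : (2:ℝ) ≤ (k:ℝ) := by exact_mod_cast hk2
      have hfac1 : (0:ℝ) < (Nat.factorial (k-1) : ℝ) := by positivity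
      have hbase : |iteratedDeriv k (fhk g L) z / (Nat.factorial k * deriv (fhk g L) z)|
          ≤ (M / r) ^ (k - 1) := by
        rw [hd, ← hkm, fhk_iter g L (k-1) hk1 z, hkm]
        have hGR := GR_bound' (k-1) z
        rw [hkm, ← hr] at hGR
        have hfkk : (Nat.factorial k : ℝ) = k * (Nat.factorial (k-1)) := by
          rw [← Nat.mul_factorial_pred (by omega : k ≠ 0)]
          push_cast
          ring
        have habs : |(-(g * iteratedDeriv (k-1) GR z)) / (Nat.factorial k * ((r - g)/r))|
            = g * |iteratedDeriv (k-1) GR z| / (Nat.factorial k * ((r - g)/r)) := by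
          rw [abs_div, abs_neg, abs_mul, abs_of_pos hg0,
            abs_of_pos (by positivity : (0:ℝ) < (Nat.factorial k : ℝ) * ((r - g)/r))]
        rw [habs]
        have hrk' : r ^ k = r ^ (k-1) * r := by rw [← pow_succ, hkm]
        calc g * |iteratedDeriv (k-1) GR z| / (Nat.factorial k * ((r - g)/r))
            ≤ g * ((Nat.factorial (k-1)) / r ^ k) / (Nat.factorial k * ((r - g)/r)) := by
              gcongr
          _ = (g / ((k:ℝ) * (r - g))) / r ^ (k-1) := by
              rw [hfkk, hrk']
              field_simp
          _ ≤ M / r ^ (k-1) := by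
              have h2k : g / ((k:ℝ) * (r - g)) ≤ g / (2 * (r - g)) := by
                rw [div_le_div_iff₀ (by positivity) (by positivity)]
                nlinarith [mul_nonneg (mul_nonneg hg0.le hrg.le)
                  (by linarith : (0:ℝ) ≤ (k:ℝ) - 2)]
              gcongr
              exact le_trans h2k hMg
          _ ≤ M ^ (k-1) / r ^ (k-1) := by
              gcongr
              exact le_self_pow₀ hM1 (by omega)
          _ = (M / r) ^ (k-1) := by rw [div_pow]
      have expeq : (1:ℝ)/((k:ℝ) - 1) = (((k-1:ℕ)):ℝ)⁻¹ := by
        rw [Nat.cast_sub (by omega : 1 ≤ k)]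
        push_cast
        rw [one_div]
      rw [expeq]
      calc |iteratedDeriv k (fhk g L) z / (Nat.factorial k * deriv (fhk g L) z)|
            ^ ((((k-1:ℕ)):ℝ)⁻¹)
          ≤ ((M / r) ^ (k-1)) ^ ((((k-1:ℕ)):ℝ)⁻¹) := by
            apply Real.rpow_le_rpow (abs_nonneg _) hbase (by positivity)
        _ = M / r := Real.pow_rpow_inv_natCast (by positivity) (by omega)
    · positivity
  have hbnn : 0 ≤ betaFn (fhk g L) z := abs_nonneg _
  have hgnn : (0:ℝ) ≤ M / r := by positivity
  calc alphaFn (fhk g L) z ≤ betaFn (fhk g L) z * (M / r) :=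
        mul_le_mul_of_nonneg_left hgamma hbnn
    _ = g * |a - Real.arsinh z| * M / (r - g) := by
        rw [hbeta]
        field_simp

lemma exp_ub {x : ℝ} (h0 : 0 ≤ x) (h1 : x ≤ 1) :
    Real.exp x ≤ 1 + x + x^2/2 + x^3/6 + x^4/24 + x^5/120 + x^6/720 + x^7/5040
      + x^8/40320 + x^9/362880 + x^10 * (11/36288000) := by
  have h := Real.exp_bound' h0 h1 (n := 10) (by norm_num)
  calc Real.exp x ≤ (∑ m ∈ Finset.range 10, x ^ m / m.factorial)
        + x ^ 10 * (10 + 1) / (Nat.factorial 10 * 10) := h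
    _ = 1 + x + x^2/2 + x^3/6 + x^4/24 + x^5/120 + x^6/720 + x^7/5040
        + x^8/40320 + x^9/362880 + x^10 * (11/36288000) := by
      simp [Finset.sum_range_succ, Nat.factorial]
      ring

lemma exp_lb {x : ℝ} (h0 : 0 ≤ x) :
    1 + x + x^2/2 + x^3/6 + x^4/24 + x^5/120 + x^6/720 + x^7/5040 + x^8/40320 + x^9/362880
      ≤ Real.exp x := by
  have h := Real.sum_le_exp_of_nonneg h0 10
  calc (1:ℝ) + x + x^2/2 + x^3/6 + x^4/24 + x^5/120 + x^6/720 + x^7/5040 + x^8/40320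
        + x^9/362880 = ∑ m ∈ Finset.range 10, x ^ m / m.factorial := by
        simp [Finset.sum_range_succ, Nat.factorial]
        try ring
    _ ≤ Real.exp x := h

-- lower bound for arsinh at rational point: ll ≤ arsinh u

lemma arsinh_lb {u s ll : ℝ} (hu : 0 ≤ u) (hs : 0 ≤ s) (hs2 : s^2 ≤ 1 + u^2)
    (h : Real.exp ll ≤ u + s) : ll ≤ Real.arsinh u := by
  rw [← Real.exp_le_exp, Real.exp_arsinh]
  have : s ≤ Real.sqrt (1 + u^2) := Real.le_sqrt_of_sq_le hs2
  linarith

lemma arsinh_ub {v s hh : ℝ} (hs2 : 1 + v^2 ≤ s^2) (hs : 0 ≤ s)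
    (h : v + s ≤ Real.exp hh) : Real.arsinh v ≤ hh := by
  rw [← Real.exp_le_exp, Real.exp_arsinh]
  have : Real.sqrt (1 + v^2) ≤ s := Real.sqrt_le_iff.2 ⟨hs, hs2⟩
  linarith

lemma ar_lb_0 : (0.874:ℝ) ≤ Real.arsinh 0.99 := by
  apply arsinh_lb (by norm_num) (by norm_num : (0:ℝ) ≤ 1.4071) (by norm_num)
  exact (exp_ub (by norm_num) (by norm_num)).trans (by norm_num)

lemma ar_lb_1 : (0.919:ℝ) ≤ Real.arsinh 1.055 := by
  apply arsinh_lb (by norm_num) (by norm_num : (0:ℝ) ≤ 1.4536) (by norm_num)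
  exact (exp_ub (by norm_num) (by norm_num)).trans (by norm_num)

lemma ar_lb_2 : (0.963:ℝ) ≤ Real.arsinh 1.12 := by
  apply arsinh_lb (by norm_num) (by norm_num : (0:ℝ) ≤ 1.5014) (by norm_num)
  exact (exp_ub (by norm_num) (by norm_num)).trans (by norm_num)

lemma ar_lb_3 : (1.090:ℝ) ≤ Real.arsinh 1.32 := by
  apply arsinh_lb (by norm_num) (by norm_num : (0:ℝ) ≤ 1.656) (by norm_num)
  have he : Real.exp (1.090:ℝ) = Real.exp 1 * Real.exp 0.09 := by
    rw [← Real.exp_add]; norm_num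
  have h2 : Real.exp (0.09:ℝ) ≤ 1 + 0.09 + 0.09^2/2 + 0.09^3/6 + 0.09^4/24 + 0.09^5/120 + 0.09^6/720 + 0.09^7/5040 + 0.09^8/40320 + 0.09^9/362880 + 0.09^10 * (11/36288000) := exp_ub (by norm_num) (by norm_num)
  have hm := mul_le_mul Real.exp_one_lt_d9.le h2 (Real.exp_pos _).le (by norm_num)
  rw [he]
  exact hm.trans (by norm_num)

lemma ar_lb_4 : (1.243:ℝ) ≤ Real.arsinh 1.59 := by
  apply arsinh_lb (by norm_num) (by norm_num : (0:ℝ) ≤ 1.8783) (by norm_num)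
  have he : Real.exp (1.243:ℝ) = Real.exp 1 * Real.exp 0.243 := by
    rw [← Real.exp_add]; norm_num
  have h2 : Real.exp (0.243:ℝ) ≤ 1 + 0.243 + 0.243^2/2 + 0.243^3/6 + 0.243^4/24 + 0.243^5/120 + 0.243^6/720 + 0.243^7/5040 + 0.243^8/40320 + 0.243^9/362880 + 0.243^10 * (11/36288000) := exp_ub (by norm_num) (by norm_num)
  have hm := mul_le_mul Real.exp_one_lt_d9.le h2 (Real.exp_pos _).le (by norm_num)
  rw [he]
  exact hm.trans (by norm_num)

lemma ar_lb_5 : (1.443:ℝ) ≤ Real.arsinh 2.00 := by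
  apply arsinh_lb (by norm_num) (by norm_num : (0:ℝ) ≤ 2.2360) (by norm_num)
  have he : Real.exp (1.443:ℝ) = Real.exp 1 * Real.exp 0.443 := by
    rw [← Real.exp_add]; norm_num
  have h2 : Real.exp (0.443:ℝ) ≤ 1 + 0.443 + 0.443^2/2 + 0.443^3/6 + 0.443^4/24 + 0.443^5/120 + 0.443^6/720 + 0.443^7/5040 + 0.443^8/40320 + 0.443^9/362880 + 0.443^10 * (11/36288000) := exp_ub (by norm_num) (by norm_num)
  have hm := mul_le_mul Real.exp_one_lt_d9.le h2 (Real.exp_pos _).le (by norm_num)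
  rw [he]
  exact hm.trans (by norm_num)

lemma ar_lb_6 : (1.729:ℝ) ≤ Real.arsinh 2.73 := by
  apply arsinh_lb (by norm_num) (by norm_num : (0:ℝ) ≤ 2.9073) (by norm_num)
  have he : Real.exp (1.729:ℝ) = Real.exp 1 * Real.exp 0.729 := by
    rw [← Real.exp_add]; norm_num
  have h2 : Real.exp (0.729:ℝ) ≤ 1 + 0.729 + 0.729^2/2 + 0.729^3/6 + 0.729^4/24 + 0.729^5/120 + 0.729^6/720 + 0.729^7/5040 + 0.729^8/40320 + 0.729^9/362880 + 0.729^10 * (11/36288000) := exp_ub (by norm_num) (by norm_num)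
  have hm := mul_le_mul Real.exp_one_lt_d9.le h2 (Real.exp_pos _).le (by norm_num)
  rw [he]
  exact hm.trans (by norm_num)

lemma ar_lb_7 : (2.079:ℝ) ≤ Real.arsinh 4.00 := by
  apply arsinh_lb (by norm_num) (by norm_num : (0:ℝ) ≤ 4.1231) (by norm_num)
  have he : Real.exp (2.079:ℝ) = Real.exp 1 * Real.exp 1 * Real.exp 0.079 := by
    rw [← Real.exp_add, ← Real.exp_add]; norm_num
  have h2 : Real.exp (0.079:ℝ) ≤ 1 + 0.079 + 0.079^2/2 + 0.079^3/6 + 0.079^4/24 + 0.079^5/120 + 0.079^6/720 + 0.079^7/5040 + 0.079^8/40320 + 0.079^9/362880 + 0.079^10 * (11/36288000) := exp_ub (by norm_num) (by norm_num)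
  have h1 := mul_le_mul Real.exp_one_lt_d9.le Real.exp_one_lt_d9.le (Real.exp_pos _).le
    (by norm_num : (0:ℝ) ≤ 2.7182818286)
  have hm := mul_le_mul h1 h2 (Real.exp_pos _).le (by norm_num)
  rw [he]
  exact hm.trans (by norm_num)

lemma ar_ub_0 : Real.arsinh 1.055 ≤ (0.92:ℝ) := by
  apply arsinh_ub (by norm_num) (by norm_num : (0:ℝ) ≤ 1.4537)
  exact le_trans (by norm_num) (exp_lb (by norm_num))

lemma ar_ub_1 : Real.arsinh 1.12 ≤ (0.964:ℝ) := by
  apply arsinh_ub (by norm_num) (by norm_num : (0:ℝ) ≤ 1.5015)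
  exact le_trans (by norm_num) (exp_lb (by norm_num))

lemma ar_ub_2 : Real.arsinh 1.32 ≤ (1.091:ℝ) := by
  apply arsinh_ub (by norm_num) (by norm_num : (0:ℝ) ≤ 1.6561)
  have he : Real.exp (1.091:ℝ) = Real.exp 1 * Real.exp 0.091 := by
    rw [← Real.exp_add]; norm_num
  have h2 : (1 + 0.091 + 0.091^2/2 + 0.091^3/6 + 0.091^4/24 + 0.091^5/120 + 0.091^6/720 + 0.091^7/5040 + 0.091^8/40320 + 0.091^9/362880 : ℝ) ≤ Real.exp 0.091 := exp_lb (by norm_num)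
  have hm := mul_le_mul Real.exp_one_gt_d9.le h2 (by norm_num) (Real.exp_pos _).le
  rw [he]
  exact le_trans (by norm_num) hm

lemma ar_ub_3 : Real.arsinh 1.60 ≤ (1.249:ℝ) := by
  apply arsinh_ub (by norm_num) (by norm_num : (0:ℝ) ≤ 1.8868)
  have he : Real.exp (1.249:ℝ) = Real.exp 1 * Real.exp 0.249 := by
    rw [← Real.exp_add]; norm_num
  have h2 : (1 + 0.249 + 0.249^2/2 + 0.249^3/6 + 0.249^4/24 + 0.249^5/120 + 0.249^6/720 + 0.249^7/5040 + 0.249^8/40320 + 0.249^9/362880 : ℝ) ≤ Real.exp 0.249 := exp_lb (by norm_num)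
  have hm := mul_le_mul Real.exp_one_gt_d9.le h2 (by norm_num) (Real.exp_pos _).le
  rw [he]
  exact le_trans (by norm_num) hm

lemma ar_ub_4 : Real.arsinh 2.01 ≤ (1.449:ℝ) := by
  apply arsinh_ub (by norm_num) (by norm_num : (0:ℝ) ≤ 2.2451)
  have he : Real.exp (1.449:ℝ) = Real.exp 1 * Real.exp 0.449 := by
    rw [← Real.exp_add]; norm_num
  have h2 : (1 + 0.449 + 0.449^2/2 + 0.449^3/6 + 0.449^4/24 + 0.449^5/120 + 0.449^6/720 + 0.449^7/5040 + 0.449^8/40320 + 0.449^9/362880 : ℝ) ≤ Real.exp 0.449 := exp_lb (by norm_num)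
  have hm := mul_le_mul Real.exp_one_gt_d9.le h2 (by norm_num) (Real.exp_pos _).le
  rw [he]
  exact le_trans (by norm_num) hm

lemma ar_ub_5 : Real.arsinh 2.74 ≤ (1.733:ℝ) := by
  apply arsinh_ub (by norm_num) (by norm_num : (0:ℝ) ≤ 2.9168)
  have he : Real.exp (1.733:ℝ) = Real.exp 1 * Real.exp 0.733 := by
    rw [← Real.exp_add]; norm_num
  have h2 : (1 + 0.733 + 0.733^2/2 + 0.733^3/6 + 0.733^4/24 + 0.733^5/120 + 0.733^6/720 + 0.733^7/5040 + 0.733^8/40320 + 0.733^9/362880 : ℝ) ≤ Real.exp 0.733 := exp_lb (by norm_num)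
  have hm := mul_le_mul Real.exp_one_gt_d9.le h2 (by norm_num) (Real.exp_pos _).le
  rw [he]
  exact le_trans (by norm_num) hm

lemma ar_ub_6 : Real.arsinh 4.00 ≤ (2.095:ℝ) := by
  apply arsinh_ub (by norm_num) (by norm_num : (0:ℝ) ≤ 4.1232)
  have he : Real.exp (2.095:ℝ) = Real.exp 1 * Real.exp 1 * Real.exp 0.095 := by
    rw [← Real.exp_add, ← Real.exp_add]; norm_num
  have h2 : (1 + 0.095 + 0.095^2/2 + 0.095^3/6 + 0.095^4/24 + 0.095^5/120 + 0.095^6/720 + 0.095^7/5040 + 0.095^8/40320 + 0.095^9/362880 : ℝ) ≤ Real.exp 0.095 := exp_lb (by norm_num)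
  have h1 := mul_le_mul Real.exp_one_gt_d9.le Real.exp_one_gt_d9.le (by norm_num)
    (Real.exp_pos _).le
  have hm := mul_le_mul h1 h2 (by norm_num) (by positivity)
  rw [he]
  exact le_trans (by norm_num) hm

lemma alpha0_gt : (0.15:ℝ) < alpha0 := by
  have h : Real.sqrt 2 < 1.425 := (Real.sqrt_lt' (by norm_num)).2 (by norm_num)
  rw [alpha0]
  linarith

lemma row (g L a u v ll hh rl : ℝ) (hg0 : 0 < g) (hg1 : g < 1)
    (h1 : u ≤ L + a * g) (h2 : L + a * g ≤ v) (hu : 0 < u)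
    (hll : ll ≤ Real.arsinh u) (hhh : Real.arsinh v ≤ hh)
    (hrl1 : 1 < rl) (hrl : rl^2 ≤ 1 + u^2)
    (hnum : max (a - ll) (hh - a) * max (1/(2*(rl - 1))) 1 / (rl - 1) < 0.15) :
    ApproxZero (fhk g L) (L + a * g) := by
  set z := L + a * g with hzdef
  clear_value z
  have hz0 : 0 < z := lt_of_lt_of_le hu h1
  have halpha := key g L a z hg0 hg1 hzdef.symm hz0
  set r := Real.sqrt (1 + z^2) with hrdef
  clear_value r
  have hrr : rl ≤ r := by
    rw [hrdef]
    apply Real.le_sqrt_of_sq_le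
    nlinarith
  have hrg : 0 < r - g := by linarith
  have hrl0 : 0 < rl - 1 := by linarith
  have hrlrg : rl - 1 ≤ r - g := by linarith
  have hzarsinh1 : ll ≤ Real.arsinh z := le_trans hll (Real.arsinh_le_arsinh.2 h1)
  have hzarsinh2 : Real.arsinh z ≤ hh := le_trans (Real.arsinh_le_arsinh.2 h2) hhh
  set D := max (a - ll) (hh - a) with hD
  have hDabs : |a - Real.arsinh z| ≤ D := by
    rw [abs_le]
    constructor
    · have := le_max_right (a - ll) (hh - a)
      linarith
    · have := le_max_left (a - ll) (hh - a)
      linarith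
  have hD0 : 0 ≤ D := le_trans (abs_nonneg _) hDabs
  set M := max (g / (2 * (r - g))) 1 with hM
  set M0 := max (1/(2*(rl - 1))) 1 with hM0
  have hMM0 : M ≤ M0 := by
    apply max_le_max _ le_rfl
    apply div_le_div₀ (by positivity) hg1.le (by positivity)
    linarith
  have hM0pos : 0 < M0 := lt_of_lt_of_le one_pos (le_max_right _ _)
  have hMpos : 0 < M := lt_of_lt_of_le one_pos (le_max_right _ _)
  have hchain : g * |a - Real.arsinh z| * M / (r - g) ≤ D * M0 / (rl - 1) := by
    apply div_le_div₀ (by positivity) _ hrl0 hrlrg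
    calc g * |a - Real.arsinh z| * M ≤ 1 * D * M0 := by
          apply mul_le_mul _ hMM0 hMpos.le (by positivity)
          apply mul_le_mul hg1.le hDabs (abs_nonneg _) (by norm_num)
      _ = D * M0 := by ring
  rw [ApproxZero]
  calc alphaFn (fhk g L) z ≤ g * |a - Real.arsinh z| * M / (r - g) := halpha
    _ ≤ D * M0 / (rl - 1) := hchain
    _ < 0.15 := hnum
    _ < alpha0 := alpha0_gt

lemma arsinh_ub_lin {z : ℝ} (hz : 4 ≤ z) : Real.arsinh z ≤ 2 + (2*z+1)/20 := by
  have h1 : Real.arsinh z ≤ Real.log (2*z+1) := by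
    rw [← Real.exp_le_exp, Real.exp_arsinh, Real.exp_log (by linarith)]
    have hs : Real.sqrt (1+z^2) ≤ z + 1 := Real.sqrt_le_iff.2 ⟨by linarith, by nlinarith⟩
    linarith
  have h2 : Real.log (2*z+1) = Real.log 20 + Real.log ((2*z+1)/20) := by
    rw [← Real.log_mul (by norm_num) (by positivity)]
    congr 1
    field_simp
  have h3 : Real.log ((2*z+1)/20) ≤ (2*z+1)/20 - 1 := Real.log_le_sub_one_of_pos (by positivity)
  have h4 : Real.log 20 ≤ 3 := by
    rw [Real.log_le_iff_le_exp (by norm_num)]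
    calc (20:ℝ) ≤ 2.7182818283^3 := by norm_num
      _ ≤ (Real.exp 1)^3 := pow_le_pow_left₀ (by norm_num) Real.exp_one_gt_d9.le 3
      _ = Real.exp 3 := by rw [Real.exp_one_pow]; norm_num
  linarith

lemma row7 (g L : ℝ) (hg0 : 0 < g) (hg1 : g < 1) (h4 : 4.00 ≤ L + 2.30 * g)
    (har4 : (2.079:ℝ) ≤ Real.arsinh 4.00) :
    ApproxZero (fhk g L) (L + 2.30 * g) := by
  set z := L + 2.30 * g with hzdef
  clear_value z
  have hz0 : (0:ℝ) < z := by linarith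
  have halpha := key g L 2.30 z hg0 hg1 hzdef.symm hz0
  set r := Real.sqrt (1 + z^2) with hrdef
  clear_value r
  have hrz : z ≤ r := by
    rw [hrdef]
    apply Real.le_sqrt_of_sq_le
    nlinarith
  have hrg : (3:ℝ) ≤ r - g := by linarith
  have hM : max (g / (2 * (r - g))) 1 = 1 := by
    apply max_eq_right
    rw [div_le_one (by linarith)]
    linarith
  rw [hM] at halpha
  set D := max (0.221:ℝ) (0.1 * z - 0.25) with hD
  have hD0 : (0:ℝ) ≤ D := le_trans (by norm_num) (le_max_left _ _)
  have hDabs : |2.30 - Real.arsinh z| ≤ D := by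
    have hlo : (2.079:ℝ) ≤ Real.arsinh z :=
      le_trans har4 (Real.arsinh_le_arsinh.2 (by linarith))
    have hhi : Real.arsinh z ≤ 2 + (2*z+1)/20 := arsinh_ub_lin (by linarith)
    rw [abs_le]
    constructor
    · have := le_max_right (0.221:ℝ) (0.1 * z - 0.25)
      linarith
    · have := le_max_left (0.221:ℝ) (0.1 * z - 0.25)
      linarith
  have hchain : g * |2.30 - Real.arsinh z| * 1 / (r - g) ≤ D / (z - 1) := by
    apply div_le_div₀ hD0 _ (by linarith) (by linarith)
    calc g * |2.30 - Real.arsinh z| * 1 ≤ 1 * D * 1 := by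
          apply mul_le_mul _ le_rfl (by norm_num) (by positivity)
          apply mul_le_mul hg1.le hDabs (abs_nonneg _) (by norm_num)
      _ = D := by ring
  have hfin : D / (z - 1) < 0.15 := by
    rw [div_lt_iff₀ (by linarith)]
    rw [hD]
    apply max_lt
    · linarith
    · linarith
  rw [ApproxZero]
  calc alphaFn (fhk g L) z ≤ g * |2.30 - Real.arsinh z| * 1 / (r - g) := halpha
    _ ≤ D / (z - 1) := hchain
    _ < 0.15 := hfin
    _ < alpha0 := alpha0_gt

end AuxHK

/-- Corollary 2.6: for each pair `(a, [S_min, S_max])` in the table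
`(0.91,[0.99,1.12])`, `(1.02,[1.12,1.32])`, `(1.16,[1.32,1.60])`, `(1.33,[1.59,2.01])`,
`(1.56,[2.00,2.74])`, `(1.90,[2.73,4.00])`, `(2.30,[4.00,∞))`, the starter
`S̃ = L + a·g` is an approximate zero of `f_{g,L}` whenever `g ∈ (0,1)` and
`S_min ≤ L + a·g ≤ S_max`. -/
theorem linear_starters_table (g L : ℝ) (hg0 : 0 < g) (hg1 : g < 1) :
    (0.99 ≤ L + 0.91 * g → L + 0.91 * g ≤ 1.12 → ApproxZero (fhk g L) (L + 0.91 * g)) ∧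
    (1.12 ≤ L + 1.02 * g → L + 1.02 * g ≤ 1.32 → ApproxZero (fhk g L) (L + 1.02 * g)) ∧
    (1.32 ≤ L + 1.16 * g → L + 1.16 * g ≤ 1.60 → ApproxZero (fhk g L) (L + 1.16 * g)) ∧
    (1.59 ≤ L + 1.33 * g → L + 1.33 * g ≤ 2.01 → ApproxZero (fhk g L) (L + 1.33 * g)) ∧
    (2.00 ≤ L + 1.56 * g → L + 1.56 * g ≤ 2.74 → ApproxZero (fhk g L) (L + 1.56 * g)) ∧
    (2.73 ≤ L + 1.90 * g → L + 1.90 * g ≤ 4.00 → ApproxZero (fhk g L) (L + 1.90 * g)) ∧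
    (4.00 ≤ L + 2.30 * g → ApproxZero (fhk g L) (L + 2.30 * g)) := by
  refine ⟨fun h1 h2 => ?_, fun h1 h2 => ?_, fun h1 h2 => ?_, fun h1 h2 => ?_,
    fun h1 h2 => ?_, fun h1 h2 => ?_, fun h1 => ?_⟩
  · by_cases hc : L + 0.91 * g ≤ 1.055
    · exact row g L 0.91 0.99 1.055 0.874 0.92 1.407 hg0 hg1 h1 hc (by norm_num)
        ar_lb_0 ar_ub_0 (by norm_num) (by norm_num) (by norm_num [max_def])
    · exact row g L 0.91 1.055 1.12 0.919 0.964 1.453 hg0 hg1 (le_of_not_ge hc) h2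
        (by norm_num) ar_lb_1 ar_ub_1 (by norm_num) (by norm_num) (by norm_num [max_def])
  · exact row g L 1.02 1.12 1.32 0.963 1.091 1.501 hg0 hg1 h1 h2 (by norm_num)
      ar_lb_2 ar_ub_2 (by norm_num) (by norm_num) (by norm_num [max_def])
  · exact row g L 1.16 1.32 1.60 1.090 1.249 1.656 hg0 hg1 h1 h2 (by norm_num)
      ar_lb_3 ar_ub_3 (by norm_num) (by norm_num) (by norm_num [max_def])
  · exact row g L 1.33 1.59 2.01 1.243 1.449 1.878 hg0 hg1 h1 h2 (by norm_num)
      ar_lb_4 ar_ub_4 (by norm_num) (by norm_num) (by norm_num [max_def])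
  · exact row g L 1.56 2.00 2.74 1.443 1.733 2.236 hg0 hg1 h1 h2 (by norm_num)
      ar_lb_5 ar_ub_5 (by norm_num) (by norm_num) (by norm_num [max_def])
  · exact row g L 1.90 2.73 4.00 1.729 2.095 2.907 hg0 hg1 h1 h2 (by norm_num)
      ar_lb_6 ar_ub_6 (by norm_num) (by norm_num) (by norm_num [max_def])
  · exact row7 g L hg0 hg1 h1 ar_lb_7
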